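/- Under the hypotheses of the previous identity (f₁ strictly decreasing and g₁ strictly increasing with g₁' > 0 and f₁' < 0 on the relevant interval), both det(J) > 0 and tr(J) < 0; hence the matrix J is Hurwitz. -/
import Mathlib


open Matrix

lemma quad_root_re_neg (t d : ℝ) (ht : t < 0) (hd : 0 < d) (z : ℂ)
    (h : z^2 - (t:ℂ) * z + (d:ℂ) = 0) : z.re < 0 := by
  set x := z.re; set y := z.im
  have hre : x^2 - y^2 - t*x + d = 0 := by
    have := congrArg Complex.re h
    simpa [pow_two, Complex.mul_re, Complex.mul_im, x, y] using this
  have him : 2*x*y - t*y = 0 := by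
    have := congrArg Complex.im h
    simp [pow_two, Complex.mul_re, Complex.mul_im, x, y] at this
    linarith
  rcases eq_or_ne y 0 with hy | hy
  · rw [hy] at hre
    nlinarith [sq_nonneg x]
  · have h2 : y * (2*x - t) = 0 := by linarith [him]
    rcases mul_eq_zero.mp h2 with h3 | h3
    · exact absurd h3 hy
    · linarith

lemma char_root (M : Matrix (Fin 2) (Fin 2) ℂ) (z : ℂ) (hz : z ∈ spectrum ℂ M) :
    z^2 - M.trace * z + M.det = 0 := by
  rw [spectrum.mem_iff, Matrix.isUnit_iff_isUnit_det, isUnit_iff_ne_zero, not_not] at hz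
  rw [Matrix.trace_fin_two, Matrix.det_fin_two]
  have heq : (algebraMap ℂ (Matrix (Fin 2) (Fin 2) ℂ)) z - M
      = !![z - M 0 0, -M 0 1; -M 1 0, z - M 1 1] := by
    ext i j
    fin_cases i <;> fin_cases j <;>
      simp [Matrix.algebraMap_eq_diagonal, Matrix.diagonal]
  rw [heq, Matrix.det_fin_two_of] at hz
  linear_combination hz

/-- Under the hypotheses of the det/trace identity, with `f₁` strictly decreasing
(`f₁' < 0`) and `g₁` strictly increasing (`g₁' > 0`) at the solution, the
Jacobian block satisfies `det J > 0` and `tr J < 0`; hence `J` is Hurwitz. -/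
theorem jacobian_block_E1010_hurwitz
    (D₂ α k₁ Sin c : ℝ) (hD₂ : 0 < D₂) (hα : 0 < α) (hk₁ : 0 < k₁)
    (hSin : 0 < Sin) (hc : 0 < c)
    (μ₁ μ₁' : ℝ → ℝ)
    (hμ₁ : ∀ s, HasDerivAt μ₁ (μ₁' s) s)
    (hμ₁pos : ∀ s, 0 < μ₁' s)
    (f₁ g₁ : ℝ → ℝ)
    (hf₁ : ∀ x, f₁ x = μ₁ (Sin - α * k₁ * x))
    (hg₁ : ∀ x, g₁ x = α * D₂ * (x - c) / x)
    (xs : ℝ) (hxs : c < xs) (hxs' : xs ≤ Sin / (α * k₁))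
    (hsol : f₁ xs = g₁ xs)
    (hf₁' : deriv f₁ xs < 0) (hg₁' : 0 < deriv g₁ xs)
    (J : Matrix (Fin 2) (Fin 2) ℝ)
    (hJ : J = !![-D₂ - k₁ * μ₁' (Sin - α * k₁ * xs) * xs, -k₁ * μ₁ (Sin - α * k₁ * xs);
                 μ₁' (Sin - α * k₁ * xs) * xs, μ₁ (Sin - α * k₁ * xs) - α * D₂]) :
    0 < J.det ∧ J.trace < 0 ∧
    (∀ z ∈ spectrum ℂ (J.map (algebraMap ℝ ℂ)), z.re < 0) := by
  have hxs0 : 0 < xs := hc.trans hxs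
  set m := μ₁ (Sin - α * k₁ * xs) with hm
  set m' := μ₁' (Sin - α * k₁ * xs) with hm'
  have hm'pos : 0 < m' := hμ₁pos _
  have hmeq : m = α * D₂ * (xs - c) / xs := by
    rw [hm, ← hf₁, hsol, hg₁]
  have hmlt : m < α * D₂ := by
    rw [hmeq, div_lt_iff₀ hxs0]
    nlinarith [mul_pos (mul_pos hα hD₂) hc]
  have hdetJ : J.det = -D₂ * m + α * D₂^2 + α * D₂ * (k₁ * m' * xs) := by
    rw [hJ, Matrix.det_fin_two_of]; ring
  have hdet : 0 < J.det := by
    rw [hdetJ]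
    nlinarith [mul_pos hD₂ (sub_pos.2 hmlt),
      mul_pos (mul_pos (mul_pos hα hD₂) hk₁) (mul_pos hm'pos hxs0)]
  have htrJ : J.trace = -D₂ - k₁ * m' * xs + (m - α * D₂) := by
    rw [hJ, Matrix.trace_fin_two_of]
  have htr : J.trace < 0 := by
    rw [htrJ]
    nlinarith [mul_pos (mul_pos hk₁ hm'pos) hxs0]
  refine ⟨hdet, htr, fun z hz => ?_⟩
  have hM : (J.map (algebraMap ℝ ℂ)).det = (J.det : ℂ) :=
    ((algebraMap ℝ ℂ).map_det J).symm
  have hMt : (J.map (algebraMap ℝ ℂ)).trace = (J.trace : ℂ) := by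
    simp [Matrix.trace, Matrix.diag, Matrix.map_apply]
  have h := char_root _ z hz
  rw [hM, hMt] at h
  exact quad_root_re_neg J.trace J.det htr hdet z h
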